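/- For every positive integer n there exists a single set of χ_n stabilizer state vectors σ₁,…,σ_{χ_n} : 𝔽₂ⁿ → ℂ whose ℂ-linear span contains the entire symmetric subspace Sⁿ(ℂ²) (in particular, ψ^{⊗n} lies in this span for every ψ ∈ ℂ²). Similarly, there exists a single set of χ_nℝ real stabilizer state vectors whose ℂ-linear span contains Sⁿ(ℂ²). -/

import Mathlib

open scoped BigOperators Classical

noncomputable section

namespace StabPaper

/-- The space `𝔽₂ⁿ` of length-`n` bitstrings. -/
abbrev F2 (n : ℕ) := Fin n → ZMod 2

/-- `A ⊆ 𝔽₂ⁿ` is a (nonempty) affine linear subspace. -/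
def IsAffineSubspace {n : ℕ} (A : Set (F2 n)) : Prop :=
  A.Nonempty ∧ ∀ x ∈ A, ∀ y ∈ A, ∀ z ∈ A, x + y + z ∈ A

/-- `l : 𝔽₂ⁿ → 𝔽₂` is a linear form. -/
def IsLinearForm {n : ℕ} (l : F2 n → ZMod 2) : Prop :=
  ∀ x y, l (x + y) = l x + l y

/-- `q : 𝔽₂ⁿ → 𝔽₂` is a quadratic form (polynomial of degree at most 2
with vanishing constant term). -/
def IsQuadraticForm {n : ℕ} (q : F2 n → ZMod 2) : Prop :=
  q 0 = 0 ∧ ∀ x y z, q (x + y + z) = q (x + y) + q (x + z) + q (y + z) + q x + q y + q z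

/-- A stabilizer state vector on `n` qubits. -/
def IsStabilizerState {n : ℕ} (σ : F2 n → ℂ) : Prop :=
  ∃ (A : Set (F2 n)) (l q : F2 n → ZMod 2),
    IsAffineSubspace A ∧ IsLinearForm l ∧ IsQuadraticForm q ∧
    ∀ x, σ x = if x ∈ A then Complex.I ^ (l x).val * (-1 : ℂ) ^ (q x).val else 0

/-- A real stabilizer state vector on `n` qubits (the case `l = 0`). -/
def IsRealStabilizerState {n : ℕ} (σ : F2 n → ℂ) : Prop :=
  ∃ (A : Set (F2 n)) (q : F2 n → ZMod 2),
    IsAffineSubspace A ∧ IsQuadraticForm q ∧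
    ∀ x, σ x = if x ∈ A then (-1 : ℂ) ^ (q x).val else 0

/-- The stabilizer rank: the least `r` such that `ψ` is a `ℂ`-linear combination of
`r` stabilizer state vectors. -/
def stabRank {n : ℕ} (ψ : F2 n → ℂ) : ℕ :=
  sInf {r : ℕ | ∃ (c : Fin r → ℂ) (σ : Fin r → (F2 n → ℂ)),
    (∀ i, IsStabilizerState (σ i)) ∧ ψ = ∑ i, c i • σ i}

/-- The real stabilizer rank: the least `r` such that `ψ` is a `ℂ`-linear combination of
`r` real stabilizer state vectors. -/
def realStabRank {n : ℕ} (ψ : F2 n → ℂ) : ℕ :=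
  sInf {r : ℕ | ∃ (c : Fin r → ℂ) (σ : Fin r → (F2 n → ℂ)),
    (∀ i, IsRealStabilizerState (σ i)) ∧ ψ = ∑ i, c i • σ i}

/-- The `n`-fold tensor power of a one-qubit vector `ψ : ℂ²`. -/
def tensorPow (ψ : ZMod 2 → ℂ) (n : ℕ) : F2 n → ℂ := fun x => ∏ i, ψ (x i)

/-- The Euclidean norm on `ℂ^{𝔽₂ⁿ}`. -/
def l2norm {n : ℕ} (φ : F2 n → ℂ) : ℝ := Real.sqrt (∑ x, ‖φ x‖ ^ 2)

/-- The δ-approximate stabilizer rank. -/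
def approxStabRank {n : ℕ} (δ : ℝ) (ψ : F2 n → ℂ) : ℕ :=
  sInf {r : ℕ | ∃ φ : F2 n → ℂ, φ ≠ 0 ∧
    l2norm (fun x => ((l2norm φ : ℝ) : ℂ)⁻¹ * φ x - ((l2norm ψ : ℝ) : ℂ)⁻¹ * ψ x) < δ ∧
    stabRank φ = r}

/-- The one-qubit vector `a·e₀ + b·e₁ ∈ ℂ²`. -/
def qubit (a b : ℂ) : ZMod 2 → ℂ := fun x => if x = 0 then a else b

/-- A nonzero `ψ ∈ ℂ²` is a one-qubit stabilizer state vector iff it is proportional to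
one of `e₀, e₁, e₀+e₁, e₀−e₁, e₀+i·e₁, e₀−i·e₁`. -/
def IsQubitStabVec (ψ : ZMod 2 → ℂ) : Prop :=
  ∃ c : ℂ, c ≠ 0 ∧ (ψ = c • qubit 1 0 ∨ ψ = c • qubit 0 1 ∨ ψ = c • qubit 1 1 ∨
    ψ = c • qubit 1 (-1) ∨ ψ = c • qubit 1 Complex.I ∨ ψ = c • qubit 1 (-Complex.I))

/-- The `n`-th generic stabilizer rank `χ_n`. -/
def genStabRank (n : ℕ) : ℕ :=
  sSup {r : ℕ | ∃ ψ : ZMod 2 → ℂ, ψ ≠ 0 ∧ stabRank (tensorPow ψ n) = r}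

/-- The `n`-th generic real stabilizer rank `χ_nℝ`. -/
def genRealStabRank (n : ℕ) : ℕ :=
  sSup {r : ℕ | ∃ ψ : ZMod 2 → ℂ, ψ ≠ 0 ∧ realStabRank (tensorPow ψ n) = r}


/-- the basis delta function -/
def delta {n : ℕ} (a : F2 n) : F2 n → ℂ := fun x => if x = a then 1 else 0

/-- Hamming weight -/
def wt {n : ℕ} (x : F2 n) : ℕ := ∑ i, (x i).val

lemma wt_le {n : ℕ} (x : F2 n) : wt x ≤ n := by
  have : ∀ i, (x i).val ≤ 1 := fun i => Nat.lt_succ_iff.mp (ZMod.val_lt (x i))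
  calc wt x ≤ ∑ _i : Fin n, 1 := Finset.sum_le_sum (fun i _ => this i)
    _ = n := by simp

lemma zmod2_cases (a : ZMod 2) : a = 0 ∨ a = 1 := by revert a; decide

lemma zmod2_val_one : (1 : ZMod 2).val = 1 := rfl

lemma zmod2_val_eq (a : ZMod 2) : a.val = if a = 1 then 1 else 0 := by
  rcases zmod2_cases a with h | h <;> simp [h, zmod2_val_one]

lemma wt_eq_card {n : ℕ} (x : F2 n) : wt x = Fintype.card {i // x i = 1} := by
  rw [Fintype.card_subtype]
  unfold wt
  rw [Finset.card_filter]
  exact Finset.sum_congr rfl (fun i _ => zmod2_val_eq (x i))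

lemma tensorPow_qubit {n : ℕ} (t : ℂ) (x : F2 n) :
    tensorPow (qubit 1 t) n x = t ^ wt x := by
  unfold tensorPow qubit wt
  rw [← Finset.prod_pow_eq_pow_sum]
  refine Finset.prod_congr rfl (fun i _ => ?_)
  rcases zmod2_cases (x i) with h | h <;> simp [h, zmod2_val_one]

lemma qubit_ne_zero (t : ℂ) : qubit 1 t ≠ 0 := by
  intro h
  have := congrFun h 0
  simp [qubit] at this

/-- symmetric functions are determined by weight -/
lemma symm_wt {n : ℕ} (f : F2 n → ℂ)
    (hf : ∀ (π : Equiv.Perm (Fin n)) (x : F2 n), f (x ∘ π) = f x)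
    {x y : F2 n} (h : wt x = wt y) : f x = f y := by
  have hcard : Fintype.card {i // y i = 1} = Fintype.card {i // x i = 1} := by
    rw [← wt_eq_card, ← wt_eq_card, h]
  obtain ⟨e⟩ := Fintype.card_eq.mp hcard
  set π := e.extendSubtype with hπ
  have hxy : x ∘ π = y := by
    funext i
    by_cases hi : y i = 1
    · have := e.extendSubtype_mem i hi
      simp only [Function.comp_apply]
      rw [this, hi]
    · have h2 := e.extendSubtype_not_mem i hi
      have hy0 : y i = 0 := by
        rcases zmod2_cases (y i) with h | h
        · exact h
        · exact absurd h hi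
      have hx0 : x (π i) = 0 := by
        rcases zmod2_cases (x (π i)) with h | h
        · exact h
        · exact absurd h h2
      simp only [Function.comp_apply]
      rw [hx0, hy0]
  rw [← hxy, hf π x]


def grank {n : ℕ} (P : (F2 n → ℂ) → Prop) (ψ : F2 n → ℂ) : ℕ :=
  sInf {r : ℕ | ∃ (c : Fin r → ℂ) (σ : Fin r → (F2 n → ℂ)),
    (∀ i, P (σ i)) ∧ ψ = ∑ i, c i • σ i}

def genrank (n : ℕ) (P : (F2 n → ℂ) → Prop) : ℕ :=
  sSup {r : ℕ | ∃ ψ : ZMod 2 → ℂ, ψ ≠ 0 ∧ grank P (tensorPow ψ n) = r}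

lemma decomp_mem {n : ℕ} (P : (F2 n → ℂ) → Prop) (hδ : ∀ a : F2 n, P (delta a)) (φ : F2 n → ℂ) :
    Fintype.card (F2 n) ∈ {r : ℕ | ∃ (c : Fin r → ℂ) (σ : Fin r → (F2 n → ℂ)),
      (∀ i, P (σ i)) ∧ φ = ∑ i, c i • σ i} := by
  set e := (Fintype.equivFin (F2 n)).symm
  refine ⟨fun i => φ (e i), fun i => delta (e i), fun i => hδ _, ?_⟩
  funext x
  rw [Finset.sum_apply]
  simp only [Pi.smul_apply, smul_eq_mul, delta]
  rw [show (∑ i : Fin (Fintype.card (F2 n)), φ (e i) * if x = e i then 1 else 0)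
      = ∑ a : F2 n, φ a * if x = a then 1 else 0 from Fintype.sum_equiv e _ _ (fun i => rfl)]
  simp

lemma grank_le_card {n : ℕ} (P : (F2 n → ℂ) → Prop) (hδ : ∀ a : F2 n, P (delta a)) (φ : F2 n → ℂ) :
    grank P φ ≤ Fintype.card (F2 n) :=
  Nat.sInf_le (decomp_mem P hδ φ)

lemma grank_mem {n : ℕ} (P : (F2 n → ℂ) → Prop) (hδ : ∀ a : F2 n, P (delta a)) (φ : F2 n → ℂ) :
    ∃ (c : Fin (grank P φ) → ℂ) (σ : Fin (grank P φ) → (F2 n → ℂ)),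
      (∀ i, P (σ i)) ∧ φ = ∑ i, c i • σ i :=
  Nat.sInf_mem ⟨_, decomp_mem P hδ φ⟩

lemma genrank_bdd {n : ℕ} (P : (F2 n → ℂ) → Prop) (hδ : ∀ a : F2 n, P (delta a)) :
    BddAbove {r : ℕ | ∃ ψ : ZMod 2 → ℂ, ψ ≠ 0 ∧ grank P (tensorPow ψ n) = r} := by
  refine ⟨Fintype.card (F2 n), fun r hr => ?_⟩
  obtain ⟨ψ, -, rfl⟩ := hr
  exact grank_le_card P hδ _

lemma span_pad {n : ℕ} {P : (F2 n → ℂ) → Prop} (hδ : ∀ a : F2 n, P (delta a))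
    {r R : ℕ} (hr : r ≤ R) (c : Fin r → ℂ) (σ : Fin r → (F2 n → ℂ)) (hσ : ∀ i, P (σ i)) :
    ∃ σ' : Fin R → (F2 n → ℂ), (∀ i, P (σ' i)) ∧
      (∑ i, c i • σ i) ∈ Submodule.span ℂ (Set.range σ') := by
  refine ⟨fun i => if h : (i : ℕ) < r then σ ⟨i, h⟩ else delta 0, fun i => ?_, ?_⟩
  · dsimp only; split
    · exact hσ _
    · exact hδ 0
  · refine Submodule.sum_mem _ (fun i _ => Submodule.smul_mem _ _ (Submodule.subset_span ?_))
    exact ⟨⟨i, lt_of_lt_of_le i.2 hr⟩, by simp [i.2]⟩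

lemma mem_span_tuple {n : ℕ} (P : (F2 n → ℂ) → Prop) (hδ : ∀ a : F2 n, P (delta a))
    {ψ : ZMod 2 → ℂ} (hψ : ψ ≠ 0) :
    ∃ σ : Fin (genrank n P) → (F2 n → ℂ), (∀ i, P (σ i)) ∧
      tensorPow ψ n ∈ Submodule.span ℂ (Set.range σ) := by
  obtain ⟨c, σ, hσ, hdec⟩ := grank_mem P hδ (tensorPow ψ n)
  have hr : grank P (tensorPow ψ n) ≤ genrank n P :=
    le_csSup (genrank_bdd P hδ) ⟨ψ, hψ, rfl⟩
  obtain ⟨σ', h1, h2⟩ := span_pad hδ hr c σ hσ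
  exact ⟨σ', h1, by rw [hdec]; exact h2⟩

lemma canon_wt {n : ℕ} (w : ℕ) (hw : w ≤ n) :
    wt (fun i : Fin n => if (i : ℕ) < w then (1 : ZMod 2) else 0) = w := by
  unfold wt
  have : ∀ i : Fin n, ((if (i : ℕ) < w then (1 : ZMod 2) else 0)).val
      = if (i : ℕ) < w then 1 else 0 := by
    intro i; split <;> simp [zmod2_val_one]
  simp only [this]
  rw [Fin.sum_univ_eq_sum_range (fun i => if i < w then 1 else 0) n]
  simp only [Finset.sum_boole, Nat.cast_id]
  rw [show (Finset.range n).filter (fun i => i < w) = Finset.range w by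
    ext i; simp [Finset.mem_filter, Finset.mem_range]; omega]
  exact Finset.card_range w

/-- the main generic lemma -/
lemma main {n : ℕ} (P : (F2 n → ℂ) → Prop) (hδ : ∀ a : F2 n, P (delta a))
    (hfin : {σ : F2 n → ℂ | P σ}.Finite) :
    ∃ σ : Fin (genrank n P) → (F2 n → ℂ), (∀ i, P (σ i)) ∧
      ∀ f : F2 n → ℂ, (∀ (π : Equiv.Perm (Fin n)) (x : F2 n), f (x ∘ π) = f x) →
        f ∈ Submodule.span ℂ (Set.range σ) := by
  classical
  set R := genrank n P with hR
  -- there is a tuple whose "good set" is infinite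
  have hTfin : {σt : Fin R → (F2 n → ℂ) | ∀ i, P (σt i)}.Finite := by
    refine (Set.Finite.pi (fun _ : Fin R => hfin)).subset ?_
    intro σt h
    exact fun i _ => h i
  have hexinf : ∃ σt : Fin R → (F2 n → ℂ), (∀ i, P (σt i)) ∧
      {t : ℂ | tensorPow (qubit 1 t) n ∈ Submodule.span ℂ (Set.range σt)}.Infinite := by
    by_contra hc
    push_neg at hc
    have hcov : (Set.univ : Set ℂ) ⊆ ⋃ σt ∈ {σt : Fin R → (F2 n → ℂ) | ∀ i, P (σt i)},
        {t : ℂ | tensorPow (qubit 1 t) n ∈ Submodule.span ℂ (Set.range σt)} := by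
      intro t _
      obtain ⟨σt, h1, h2⟩ := mem_span_tuple P hδ (qubit_ne_zero t)
      exact Set.mem_biUnion h1 h2
    have : (Set.univ : Set ℂ).Finite :=
      Set.Finite.subset (Set.Finite.biUnion hTfin
        (fun σt hσt => hc σt hσt)) hcov
    exact Set.infinite_univ this
  obtain ⟨σt, hP, hinf⟩ := hexinf
  refine ⟨σt, hP, ?_⟩
  intro f hf
  -- pick n+1 distinct parameters
  set T := {t : ℂ | tensorPow (qubit 1 t) n ∈ Submodule.span ℂ (Set.range σt)} with hT
  set emb := hinf.natEmbedding with hemb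
  set t : Fin (n + 1) → ℂ := fun j => (emb (j : ℕ) : ℂ) with ht
  have htinj : Function.Injective t := by
    intro a b hab
    have := emb.injective (Subtype.coe_injective hab)
    exact Fin.val_injective this
  have htmem : ∀ j, tensorPow (qubit 1 (t j)) n ∈ Submodule.span ℂ (Set.range σt) :=
    fun j => (emb (j : ℕ)).2
  -- Vandermonde
  set M : Matrix (Fin (n + 1)) (Fin (n + 1)) ℂ := (Matrix.vandermonde t).transpose with hM
  have hdet : M.det ≠ 0 := by
    rw [Matrix.det_transpose, Matrix.det_vandermonde]
    refine Finset.prod_ne_zero_iff.mpr (fun i _ => Finset.prod_ne_zero_iff.mpr (fun j hj => ?_))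
    have : i ≠ j := (Finset.mem_Ioi.mp hj).ne
    exact sub_ne_zero.mpr (fun h => this (htinj h.symm))
  set g : Fin (n + 1) → ℂ := fun w => f (fun i : Fin n => if (i : ℕ) < (w : ℕ) then 1 else 0)
    with hg
  set c : Fin (n + 1) → ℂ := M⁻¹.mulVec g with hc
  have hMc : M.mulVec c = g := by
    rw [hc, Matrix.mulVec_mulVec, Matrix.mul_nonsing_inv _ (isUnit_iff_ne_zero.mpr hdet),
      Matrix.one_mulVec]
  have key : ∀ x : F2 n, f x = ∑ j, c j * t j ^ wt x := by
    intro x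
    have hlt : wt x < n + 1 := Nat.lt_succ_of_le (wt_le x)
    have h1 : f x = g ⟨wt x, hlt⟩ := by
      rw [hg]
      exact symm_wt f hf (by rw [canon_wt _ (wt_le x)])
    have h2 : M.mulVec c ⟨wt x, hlt⟩ = g ⟨wt x, hlt⟩ := by rw [hMc]
    rw [h1, ← h2]
    simp only [Matrix.mulVec, dotProduct, hM, Matrix.transpose_apply,
      Matrix.vandermonde]
    exact Finset.sum_congr rfl (fun j _ => mul_comm _ _)
  have hfeq : f = ∑ j, c j • tensorPow (qubit 1 (t j)) n := by
    funext x
    rw [Finset.sum_apply]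
    simp only [Pi.smul_apply, smul_eq_mul, tensorPow_qubit]
    exact key x
  rw [hfeq]
  exact Submodule.sum_mem _ (fun j _ => Submodule.smul_mem _ _ (htmem j))


lemma delta_stab {n : ℕ} (a : F2 n) : IsStabilizerState (delta a) := by
  refine ⟨{a}, 0, 0, ⟨⟨a, rfl⟩, ?_⟩, fun x y => by simp, ⟨rfl, fun x y z => by simp⟩, ?_⟩
  · intro x hx y hy z hz
    rw [Set.mem_singleton_iff] at hx hy hz
    have haa : a + a = 0 := by
      funext i
      simp only [Pi.add_apply, Pi.zero_apply]
      rcases zmod2_cases (a i) with h | h <;> rw [h] <;> decide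
    rw [Set.mem_singleton_iff, hx, hy, hz, haa, zero_add]
  · intro x
    simp only [delta, Set.mem_singleton_iff, Pi.zero_apply]
    split <;> simp

lemma delta_realstab {n : ℕ} (a : F2 n) : IsRealStabilizerState (delta a) := by
  refine ⟨{a}, 0, ⟨⟨a, rfl⟩, ?_⟩, ⟨rfl, fun x y z => by simp⟩, ?_⟩
  · intro x hx y hy z hz
    rw [Set.mem_singleton_iff] at hx hy hz
    have haa : a + a = 0 := by
      funext i
      simp only [Pi.add_apply, Pi.zero_apply]
      rcases zmod2_cases (a i) with h | h <;> rw [h] <;> decide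
    rw [Set.mem_singleton_iff, hx, hy, hz, haa, zero_add]
  · intro x
    simp only [delta, Set.mem_singleton_iff, Pi.zero_apply]
    split <;> simp

lemma stab_finite {n : ℕ} : {σ : F2 n → ℂ | IsStabilizerState σ}.Finite := by
  classical
  have : {σ : F2 n → ℂ | IsStabilizerState σ} ⊆ Set.range
      (fun Alq : Set (F2 n) × (F2 n → ZMod 2) × (F2 n → ZMod 2) =>
        (fun x => if x ∈ Alq.1 then Complex.I ^ (Alq.2.1 x).val * (-1 : ℂ) ^ (Alq.2.2 x).val
          else 0 : F2 n → ℂ)) := by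
    rintro σ ⟨A, l, q, -, -, -, h⟩
    exact ⟨(A, l, q), by funext x; exact (h x).symm⟩
  exact (Set.finite_range _).subset this

lemma realstab_finite {n : ℕ} : {σ : F2 n → ℂ | IsRealStabilizerState σ}.Finite := by
  classical
  have : {σ : F2 n → ℂ | IsRealStabilizerState σ} ⊆ Set.range
      (fun Aq : Set (F2 n) × (F2 n → ZMod 2) =>
        (fun x => if x ∈ Aq.1 then (-1 : ℂ) ^ (Aq.2 x).val else 0 : F2 n → ℂ)) := by
    rintro σ ⟨A, q, -, -, h⟩
    exact ⟨(A, q), by funext x; exact (h x).symm⟩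
  exact (Set.finite_range _).subset this

/-- For every `n ≥ 1` there is a single set of `χ_n` stabilizer state vectors whose span
contains the symmetric subspace `Sⁿ(ℂ²)` (all permutation-invariant functions), and a
single set of `χ_nℝ` real stabilizer state vectors whose span contains `Sⁿ(ℂ²)`. -/
theorem stab_states_spanning_symmetric_subspace (n : ℕ) (hn : 1 ≤ n) :
    (∃ σ : Fin (genStabRank n) → (F2 n → ℂ),
      (∀ i, IsStabilizerState (σ i)) ∧
      ∀ f : F2 n → ℂ, (∀ (π : Equiv.Perm (Fin n)) (x : F2 n), f (x ∘ π) = f x) →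
        f ∈ Submodule.span ℂ (Set.range σ)) ∧
    (∃ σ : Fin (genRealStabRank n) → (F2 n → ℂ),
      (∀ i, IsRealStabilizerState (σ i)) ∧
      ∀ f : F2 n → ℂ, (∀ (π : Equiv.Perm (Fin n)) (x : F2 n), f (x ∘ π) = f x) →
        f ∈ Submodule.span ℂ (Set.range σ)) := by
  constructor
  · exact main IsStabilizerState delta_stab stab_finite
  · exact main IsRealStabilizerState delta_realstab realstab_finite

end StabPaper
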